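/- Let Ω be a finite set with |Ω| = n and N = 2^n, and let k ≥ 1 be a real number. For all mass functions m1, m2 on Ω, Σ_{A⊆Ω} |q_{m1 ⊚∩ m2}(A) − q_{m_∅}(A)|^k = N − 1 holds if and only if m1 = m_Ω and m2 = m_Ω. In particular, the conflict degree C(m1,m2) = 1 − (N−1)^{−1/k}·(Σ_{A⊆Ω} |q_{m1 ⊚∩ m2}(A) − q_{m_∅}(A)|^k)^{1/k} vanishes only for the pair of vacuous mass functions, so it fails the extreme-conflict-values property. -/
import Mathlib


open Finset

/-- A mass function on a finite frame `Ω`: nonnegative and sums to one over all subsets. -/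
def IsMass {Ω : Type*} [Fintype Ω] (m : Finset Ω → ℝ) : Prop :=
  (∀ A, 0 ≤ m A) ∧ ∑ A : Finset Ω, m A = 1

/-- Commonality (inclusion functional): `q m A = ∑_{E ⊇ A} m E`. -/
def commonality {Ω : Type*} [Fintype Ω] [DecidableEq Ω] (m : Finset Ω → ℝ) (A : Finset Ω) : ℝ :=
  ∑ E : Finset Ω, if A ⊆ E then m E else 0

/-- Plausibility (hitting functional): `pl m A = ∑_{E ∩ A ≠ ∅} m E`. -/
def plaus {Ω : Type*} [Fintype Ω] [DecidableEq Ω] (m : Finset Ω → ℝ) (A : Finset Ω) : ℝ :=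
  ∑ E : Finset Ω, if E ∩ A ≠ ∅ then m E else 0

/-- Implicability: `b m A = ∑_{E ⊆ A} m E`. -/
def implic {Ω : Type*} [Fintype Ω] [DecidableEq Ω] (m : Finset Ω → ℝ) (A : Finset Ω) : ℝ :=
  ∑ E : Finset Ω, if E ⊆ A then m E else 0

/-- Conjunctive combination: `(m1 ⊚∩ m2)(E) = ∑_{A ∩ B = E} m1 A * m2 B`. -/
def conjC {Ω : Type*} [Fintype Ω] [DecidableEq Ω] (m1 m2 : Finset Ω → ℝ) (E : Finset Ω) : ℝ :=
  ∑ A : Finset Ω, ∑ B : Finset Ω, if A ∩ B = E then m1 A * m2 B else 0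

/-- Disjunctive combination: `(m1 ⊚∪ m2)(E) = ∑_{A ∪ B = E} m1 A * m2 B`. -/
def disjC {Ω : Type*} [Fintype Ω] [DecidableEq Ω] (m1 m2 : Finset Ω → ℝ) (E : Finset Ω) : ℝ :=
  ∑ A : Finset Ω, ∑ B : Finset Ω, if A ∪ B = E then m1 A * m2 B else 0

/-- Categorical mass function `m_A`. -/
def categorical {Ω : Type*} [Fintype Ω] [DecidableEq Ω] (A : Finset Ω) : Finset Ω → ℝ :=
  fun E => if E = A then 1 else 0

lemma commonality_conjC {Ω : Type*} [Fintype Ω] [DecidableEq Ω] (m1 m2 : Finset Ω → ℝ)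
    (A : Finset Ω) : commonality (conjC m1 m2) A = commonality m1 A * commonality m2 A := by
  unfold commonality conjC
  rw [Finset.sum_mul_sum]
  have h : ∀ E : Finset Ω, (if A ⊆ E then ∑ B : Finset Ω, ∑ C : Finset Ω,
      (if B ∩ C = E then m1 B * m2 C else 0) else 0)
      = ∑ B : Finset Ω, ∑ C : Finset Ω,
        (if E = B ∩ C ∧ A ⊆ E then m1 B * m2 C else 0) := by
    intro E
    split
    · refine Finset.sum_congr rfl fun B _ => Finset.sum_congr rfl fun C _ => ?_
      congr 1
      simp_all [eq_comm, and_iff_left]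
    · symm; refine Finset.sum_eq_zero fun B _ => Finset.sum_eq_zero fun C _ => ?_
      simp_all
  simp only [h]
  rw [Finset.sum_comm]
  refine Finset.sum_congr rfl fun B _ => ?_
  rw [Finset.sum_comm]
  refine Finset.sum_congr rfl fun C _ => ?_
  simp only [ite_and]
  rw [Finset.sum_ite_eq']
  simp [Finset.subset_inter_iff, ite_and, mul_ite, ite_mul]
  split_ifs <;> simp

lemma commonality_nonneg {Ω : Type*} [Fintype Ω] [DecidableEq Ω] {m : Finset Ω → ℝ}
    (hm : ∀ A, 0 ≤ m A) (A : Finset Ω) : 0 ≤ commonality m A :=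
  Finset.sum_nonneg fun E _ => by split; exacts [hm E, le_rfl]

lemma commonality_le_one {Ω : Type*} [Fintype Ω] [DecidableEq Ω] {m : Finset Ω → ℝ}
    (hm : IsMass m) (A : Finset Ω) : commonality m A ≤ 1 := by
  rw [← hm.2]
  exact Finset.sum_le_sum fun E _ => by split; exacts [le_rfl, hm.1 E]

lemma commonality_empty {Ω : Type*} [Fintype Ω] [DecidableEq Ω] {m : Finset Ω → ℝ}
    (hm : IsMass m) : commonality m (∅ : Finset Ω) = 1 := by
  rw [← hm.2]; exact Finset.sum_congr rfl fun E _ => by simp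

lemma commonality_univ {Ω : Type*} [Fintype Ω] [DecidableEq Ω] (m : Finset Ω → ℝ) :
    commonality m (Finset.univ : Finset Ω) = m Finset.univ := by
  unfold commonality
  rw [Finset.sum_eq_single Finset.univ]
  · simp
  · intro E _ hE
    rw [if_neg fun h => hE (Finset.univ_subset_iff.mp h)]
  · simp

lemma commonality_cat_empty {Ω : Type*} [Fintype Ω] [DecidableEq Ω] (A : Finset Ω) :
    commonality (categorical (∅ : Finset Ω)) A = if A = ∅ then 1 else 0 := by
  unfold commonality categorical
  rw [Finset.sum_eq_single (∅ : Finset Ω)]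
  · simp [Finset.subset_empty]
  · intro E _ hE; simp [hE]
  · simp

lemma commonality_cat_univ {Ω : Type*} [Fintype Ω] [DecidableEq Ω] (A : Finset Ω) :
    commonality (categorical (Finset.univ : Finset Ω)) A = 1 := by
  unfold commonality categorical
  rw [Finset.sum_eq_single (Finset.univ : Finset Ω)]
  · simp
  · intro E _ hE; simp [hE]
  · simp

lemma mass_univ_one_eq_cat {Ω : Type*} [Fintype Ω] [DecidableEq Ω] {m : Finset Ω → ℝ}
    (hm : IsMass m) (h : m Finset.univ = 1) : m = categorical (Finset.univ : Finset Ω) := by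
  have hrest : ∑ E ∈ Finset.univ.erase (Finset.univ : Finset Ω), m E = 0 := by
    have := Finset.add_sum_erase Finset.univ m (Finset.mem_univ (Finset.univ : Finset Ω))
    rw [hm.2, h] at this; linarith
  have hz := (Finset.sum_eq_zero_iff_of_nonneg (fun E _ => hm.1 E)).1 hrest
  funext E
  by_cases hE : E = Finset.univ
  · simp [hE, categorical, h]
  · simp [categorical, hE, hz E (by simp [hE])]

/-- With `N = 2^n`, for all mass functions `m1, m2`,
`∑_{A⊆Ω} |q_{m1 ⊚∩ m2}(A) − q_{m_∅}(A)|^k = N − 1` holds iff `m1 = m_Ω` and `m2 = m_Ω`;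
so the conflict degree `1 − (N−1)^{−1/k}·(∑ …)^{1/k}` vanishes only for the pair of
vacuous mass functions, failing the extreme-conflict-values property. -/
theorem lk_commonality_conflict_max_iff_vacuous {Ω : Type*} [Fintype Ω] [DecidableEq Ω]
    (k : ℝ) (hk : 1 ≤ k) (m1 m2 : Finset Ω → ℝ) (h1 : IsMass m1) (h2 : IsMass m2) :
    (∑ A : Finset Ω,
        |commonality (conjC m1 m2) A - commonality (categorical (∅ : Finset Ω)) A| ^ k =
      2 ^ (Fintype.card Ω) - 1) ↔
      m1 = categorical (Finset.univ : Finset Ω) ∧ m2 = categorical (Finset.univ : Finset Ω) := by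
  have hk0 : (0:ℝ) < k := lt_of_lt_of_le one_pos hk
  set f : Finset Ω → ℝ := fun A =>
    |commonality (conjC m1 m2) A - commonality (categorical (∅ : Finset Ω)) A| ^ k with hf
  have hq1nn := commonality_nonneg h1.1
  have hq2nn := commonality_nonneg h2.1
  have hq1le := commonality_le_one h1
  have hq2le := commonality_le_one h2
  have hqnn : ∀ A, 0 ≤ commonality (conjC m1 m2) A := fun A => by
    rw [commonality_conjC]; exact mul_nonneg (hq1nn A) (hq2nn A)
  have hqle : ∀ A, commonality (conjC m1 m2) A ≤ 1 := fun A => by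
    rw [commonality_conjC]
    exact mul_le_one₀ (hq1le A) (hq2nn A) (hq2le A)
  have hfne : ∀ A : Finset Ω, A ≠ ∅ → f A = commonality (conjC m1 m2) A ^ k := by
    intro A hA
    rw [hf]
    simp only [commonality_cat_empty, if_neg hA, sub_zero, abs_of_nonneg (hqnn A)]
  have hfem : f ∅ = 0 := by
    rw [hf]
    simp only [commonality_cat_empty, if_pos rfl]
    rw [commonality_conjC, commonality_empty h1, commonality_empty h2]
    simp [Real.zero_rpow (ne_of_gt hk0)]
  have hcard : (Finset.univ.erase (∅ : Finset Ω)).card = 2 ^ Fintype.card Ω - 1 := by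
    rw [Finset.card_erase_of_mem (Finset.mem_univ _), Finset.card_univ, Fintype.card_finset]
  have hsplit : ∑ A : Finset Ω, f A = ∑ A ∈ Finset.univ.erase (∅ : Finset Ω), f A := by
    rw [← Finset.add_sum_erase Finset.univ f (Finset.mem_univ (∅ : Finset Ω)), hfem, zero_add]
  constructor
  · intro hsum
    have key : m1 Finset.univ = 1 ∧ m2 Finset.univ = 1 := by
      have hprod : commonality m1 Finset.univ * commonality m2 Finset.univ = 1 := by
        rcases eq_or_ne (Finset.univ : Finset Ω) (∅ : Finset Ω) with hu | hu
        · rw [hu, commonality_empty h1, commonality_empty h2, one_mul]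
        · rw [← commonality_conjC]
          have hmem : (Finset.univ : Finset Ω) ∈ Finset.univ.erase (∅ : Finset Ω) := by
            simp [hu]
          have hfle : ∀ A ∈ Finset.univ.erase (∅ : Finset Ω), f A ≤ 1 := by
            intro A hA
            rw [hfne A (Finset.ne_of_mem_erase hA)]
            exact Real.rpow_le_one (hqnn A) (hqle A) (le_of_lt hk0)
          have hfu : f Finset.univ = 1 := by
            by_contra hne
            have hlt : f Finset.univ < 1 := lt_of_le_of_ne (hfle _ hmem) hne
            have : ∑ A ∈ Finset.univ.erase (∅ : Finset Ω), f A <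
                ∑ A ∈ Finset.univ.erase (∅ : Finset Ω), (1:ℝ) :=
              Finset.sum_lt_sum hfle ⟨Finset.univ, hmem, hlt⟩
            rw [Finset.sum_const, hcard, nsmul_eq_mul, mul_one, ← hsplit, hsum] at this
            have h2n : (1:ℕ) ≤ 2 ^ Fintype.card Ω := Nat.one_le_two_pow
            push_cast [h2n] at this
            linarith
          rw [hfne _ hu] at hfu
          by_contra hne1
          have hlt : commonality (conjC m1 m2) Finset.univ < 1 :=
            lt_of_le_of_ne (hqle _) hne1
          exact absurd hfu (ne_of_lt (Real.rpow_lt_one (hqnn _) hlt hk0))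
      rw [commonality_univ, commonality_univ] at hprod
      have hm1le : m1 Finset.univ ≤ 1 := by
        rw [← h1.2]
        exact Finset.single_le_sum (fun E _ => h1.1 E) (Finset.mem_univ _)
      have hm2le : m2 Finset.univ ≤ 1 := by
        rw [← h2.2]
        exact Finset.single_le_sum (fun E _ => h2.1 E) (Finset.mem_univ _)
      have hm1nn := h1.1 Finset.univ
      have hm2nn := h2.1 Finset.univ
      constructor <;> nlinarith
    exact ⟨mass_univ_one_eq_cat h1 key.1, mass_univ_one_eq_cat h2 key.2⟩
  · rintro ⟨rfl, rfl⟩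
    have hq : ∀ A : Finset Ω,
        commonality (conjC (categorical (Finset.univ : Finset Ω))
          (categorical (Finset.univ : Finset Ω))) A = 1 := fun A => by
      rw [commonality_conjC]; simp [commonality_cat_univ]
    have : ∀ A : Finset Ω, f A = if A = ∅ then 0 else 1 := by
      intro A
      by_cases hA : A = ∅
      · rw [if_pos hA, hA, hfem]
      · rw [if_neg hA, hfne A hA, hq, Real.one_rpow]
    calc ∑ A : Finset Ω, f A = ∑ A : Finset Ω, (if A = ∅ then (0:ℝ) else 1) :=
          Finset.sum_congr rfl fun A _ => this A
      _ = 2 ^ Fintype.card Ω - 1 := by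
          have h2 : ∀ A : Finset Ω, (if A = ∅ then (0:ℝ) else 1)
              = (1:ℝ) - (if A = ∅ then (1:ℝ) else 0) := fun A => by split <;> norm_num
          simp only [h2]
          rw [Finset.sum_sub_distrib, Finset.sum_const,
            Finset.sum_ite_eq' Finset.univ (∅ : Finset Ω) (fun _ => (1:ℝ))]
          simp [Finset.card_univ, Fintype.card_finset]
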